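/- For every b ∈ (0,1) there exists x* = x*(b) > 0 such that for every x > x*: φ_1(bx) − (1/b)·φ_{1,b}(x) > 0, b·φ_{1,b}(x) − φ_1(x) < 0, and Ψ_b(x) > 0. -/

import Mathlib

open MeasureTheory Real

noncomputable section

namespace DCV16

/-- `φ_1(x) = ∫_0^{2π} e^{−2x·sin(η/2)} cos η dη`. -/
def phi1 (x : ℝ) : ℝ :=
  ∫ η in (0:ℝ)..(2*π), Real.exp (-2*x*Real.sin (η/2)) * Real.cos η

/-- `φ_{1,b}(x) = ∫_0^{2π} e^{−x·√(1+b²−2b·cos η)} cos η dη`. -/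
def phi1b (b x : ℝ) : ℝ :=
  ∫ η in (0:ℝ)..(2*π), Real.exp (-x * Real.sqrt (1 + b^2 - 2*b*Real.cos η)) * Real.cos η

/-- `Ψ_b(x) = φ_1(x) + φ_1(bx) − (b+1/b)·φ_{1,b}(x)`. -/
def Psi (b x : ℝ) : ℝ := phi1 x + phi1 (b*x) - (b + 1/b) * phi1b b x


open Filter in
private lemma integral_exp_neg_mul (x L : ℝ) (hx : x ≠ 0) :
    ∫ η in (0:ℝ)..L, Real.exp (-x*η) = (1 - Real.exp (-x*L))/x := by
  have h : ∀ η ∈ Set.uIcc (0:ℝ) L,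
      HasDerivAt (fun t => -Real.exp (-x*t)/x) (Real.exp (-x*η)) η := by
    intro η _
    have h1 : HasDerivAt (fun t : ℝ => -x*t) (-x) η := by
      simpa using (hasDerivAt_id η).const_mul (-x)
    have h2 := ((h1.exp).div_const x).neg
    convert h2 using 1
    · ext t; field_simp
    · ext t; rfl
    · ext t; rw [Pi.neg_apply, neg_div]
    · rw [mul_neg, neg_div, neg_neg, mul_div_assoc, div_self hx, mul_one]
  rw [intervalIntegral.integral_eq_sub_of_hasDerivAt h
    (((Real.continuous_exp.comp (continuous_const.mul continuous_id)).intervalIntegrable _ _))]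
  field_simp
  simp only [mul_zero, neg_zero, Real.exp_zero]
  ring

private lemma phi1_lower {x : ℝ} (hx : 0 < x) :
    (1 - Real.exp (-x*(π/3)))/(2*x) - (4*π/3) * Real.exp (-x) ≤ phi1 x := by
  have hpi := Real.pi_pos
  have hcont : Continuous fun η : ℝ => Real.exp (-2*x*Real.sin (η/2)) * Real.cos η := by
    continuity
  have hint : ∀ a c : ℝ, IntervalIntegrable
      (fun η : ℝ => Real.exp (-2*x*Real.sin (η/2)) * Real.cos η) volume a c :=
    fun a c => hcont.intervalIntegrable a c
  have h1 := intervalIntegral.integral_add_adjacent_intervals (μ := volume)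
    (hint 0 (π/3)) (hint (π/3) (5*π/3))
  have h2 := intervalIntegral.integral_add_adjacent_intervals (μ := volume)
    (hint 0 (5*π/3)) (hint (5*π/3) (2*π))
  -- lower bound on [0, π/3]
  have hI1 : (1 - Real.exp (-x*(π/3)))/(2*x)
      ≤ ∫ η in (0:ℝ)..(π/3), Real.exp (-2*x*Real.sin (η/2)) * Real.cos η := by
    have hmono : (∫ η in (0:ℝ)..(π/3), Real.exp (-x*η) * (1/2))
        ≤ ∫ η in (0:ℝ)..(π/3), Real.exp (-2*x*Real.sin (η/2)) * Real.cos η := by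
      apply intervalIntegral.integral_mono_on (by positivity)
        (((Real.continuous_exp.comp (continuous_const.mul continuous_id)).mul
          continuous_const).intervalIntegrable _ _) (hint _ _)
      intro η hη
      obtain ⟨h0, h3⟩ := hη
      have hcos : (1/2:ℝ) ≤ Real.cos η := by
        have := Real.cos_le_cos_of_nonneg_of_le_pi h0 (by linarith) h3
        rw [Real.cos_pi_div_three] at this
        linarith
      have hsin : Real.sin (η/2) ≤ η/2 := Real.sin_le (by linarith)
      have hexp : Real.exp (-x*η) ≤ Real.exp (-2*x*Real.sin (η/2)) := by
        apply Real.exp_le_exp.2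
        nlinarith
      exact mul_le_mul hexp hcos (by norm_num) (Real.exp_pos _).le
    have hcalc : (∫ η in (0:ℝ)..(π/3), Real.exp (-x*η) * (1/2))
        = (1 - Real.exp (-x*(π/3)))/(2*x) := by
      rw [intervalIntegral.integral_mul_const, integral_exp_neg_mul x (π/3) hx.ne']
      ring
    linarith [hmono, hcalc.symm.le]
  -- bound on [π/3, 5π/3]
  have hI2 : -((4*π/3) * Real.exp (-x))
      ≤ ∫ η in (π/3:ℝ)..(5*π/3), Real.exp (-2*x*Real.sin (η/2)) * Real.cos η := by
    have hb : ∀ η ∈ Set.uIoc (π/3:ℝ) (5*π/3),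
        ‖Real.exp (-2*x*Real.sin (η/2)) * Real.cos η‖ ≤ Real.exp (-x) := by
      intro η hη
      rw [Set.uIoc_of_le (by linarith)] at hη
      obtain ⟨hl, hr⟩ := hη
      have hsin : (1/2:ℝ) ≤ Real.sin (η/2) := by
        rcases le_total (η/2) (π/2) with hcase | hcase
        · have h := Real.sin_le_sin_of_le_of_le_pi_div_two (x := π/6) (y := η/2)
            (by linarith) hcase (by linarith)
          rwa [Real.sin_pi_div_six] at h
        · have heq : Real.sin (π - η/2) = Real.sin (η/2) := Real.sin_pi_sub _
          have h := Real.sin_le_sin_of_le_of_le_pi_div_two (x := π/6) (y := π - η/2)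
            (by linarith) (by linarith) (by linarith)
          rw [Real.sin_pi_div_six, heq] at h
          exact h
      have hE : Real.exp (-2*x*Real.sin (η/2)) ≤ Real.exp (-x) := by
        apply Real.exp_le_exp.2
        nlinarith
      calc ‖Real.exp (-2*x*Real.sin (η/2)) * Real.cos η‖
          = Real.exp (-2*x*Real.sin (η/2)) * |Real.cos η| := by
            rw [norm_mul, Real.norm_eq_abs, Real.norm_eq_abs, Real.abs_exp]
        _ ≤ Real.exp (-2*x*Real.sin (η/2)) * 1 := by
            have := Real.abs_cos_le_one η
            exact mul_le_mul_of_nonneg_left this (Real.exp_pos _).le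
        _ ≤ Real.exp (-x) := by rw [mul_one]; exact hE
    have := intervalIntegral.norm_integral_le_of_norm_le_const hb
    have habs : |(5*π/3 : ℝ) - π/3| = 4*π/3 := by
      rw [abs_of_nonneg (by linarith)]; ring
    rw [habs, Real.norm_eq_abs] at this
    have := neg_abs_le (∫ η in (π/3:ℝ)..(5*π/3), Real.exp (-2*x*Real.sin (η/2)) * Real.cos η)
    linarith [abs_le.mp (by assumption : |∫ η in (π/3:ℝ)..(5*π/3),
      Real.exp (-2*x*Real.sin (η/2)) * Real.cos η| ≤ Real.exp (-x) * (4*π/3))]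
  -- nonnegativity on [5π/3, 2π]
  have hI3 : 0 ≤ ∫ η in (5*π/3:ℝ)..(2*π), Real.exp (-2*x*Real.sin (η/2)) * Real.cos η := by
    apply intervalIntegral.integral_nonneg (by linarith)
    intro η hη
    obtain ⟨hl, hr⟩ := hη
    have hcos : 0 ≤ Real.cos η := by
      rw [← Real.cos_sub_two_pi]
      apply Real.cos_nonneg_of_mem_Icc
      constructor <;> [linarith; linarith]
    positivity
  have hphi : phi1 x = (∫ η in (0:ℝ)..(π/3), Real.exp (-2*x*Real.sin (η/2)) * Real.cos η)
      + (∫ η in (π/3:ℝ)..(5*π/3), Real.exp (-2*x*Real.sin (η/2)) * Real.cos η)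
      + (∫ η in (5*π/3:ℝ)..(2*π), Real.exp (-2*x*Real.sin (η/2)) * Real.cos η) := by
    rw [phi1]
    linarith [h1, h2]
  linarith [hI1, hI2, hI3, hphi.symm.le]

private lemma phi1b_bound {b x : ℝ} (hb0 : 0 < b) (hb1 : b ≤ 1) (hx : 0 ≤ x) :
    |phi1b b x| ≤ 2*π*Real.exp (-(1-b)*x) := by
  have hpi := Real.pi_pos
  have hb : ∀ η ∈ Set.uIoc (0:ℝ) (2*π),
      ‖Real.exp (-x * Real.sqrt (1 + b^2 - 2*b*Real.cos η)) * Real.cos η‖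
        ≤ Real.exp (-(1-b)*x) := by
    intro η _
    have h1 : (1-b)^2 ≤ 1 + b^2 - 2*b*Real.cos η := by
      nlinarith [Real.cos_le_one η]
    have h2 : (1-b) ≤ Real.sqrt (1 + b^2 - 2*b*Real.cos η) := by
      calc (1-b) = Real.sqrt ((1-b)^2) := (Real.sqrt_sq (by linarith)).symm
        _ ≤ _ := Real.sqrt_le_sqrt h1
    have hE : Real.exp (-x * Real.sqrt (1 + b^2 - 2*b*Real.cos η)) ≤ Real.exp (-(1-b)*x) := by
      apply Real.exp_le_exp.2
      nlinarith
    calc ‖Real.exp (-x * Real.sqrt (1 + b^2 - 2*b*Real.cos η)) * Real.cos η‖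
        = Real.exp (-x * Real.sqrt (1 + b^2 - 2*b*Real.cos η)) * |Real.cos η| := by
          rw [norm_mul, Real.norm_eq_abs, Real.norm_eq_abs, Real.abs_exp]
      _ ≤ Real.exp (-x * Real.sqrt (1 + b^2 - 2*b*Real.cos η)) * 1 :=
          mul_le_mul_of_nonneg_left (Real.abs_cos_le_one η) (Real.exp_pos _).le
      _ ≤ Real.exp (-(1-b)*x) := by rw [mul_one]; exact hE
  have h := intervalIntegral.norm_integral_le_of_norm_le_const hb
  rw [Real.norm_eq_abs] at h
  have habs : |(2*π : ℝ) - 0| = 2*π := by rw [abs_of_nonneg (by linarith)]; ring_nf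
  rw [habs] at h
  calc |phi1b b x| ≤ Real.exp (-(1-b)*x) * (2*π) := h
    _ = 2*π*Real.exp (-(1-b)*x) := by ring

open Filter in
private lemma exp_half_ev {a : ℝ} (ha : 0 < a) :
    ∀ᶠ x : ℝ in atTop, Real.exp (-(a*x)) ≤ 1/2 := by
  have h1 : Tendsto (fun x : ℝ => a*x) atTop atTop :=
    tendsto_id.const_mul_atTop ha
  have h2 : Tendsto (fun x : ℝ => -(a*x)) atTop atBot :=
    tendsto_neg_atTop_atBot.comp h1
  have h3 : Tendsto (fun x : ℝ => Real.exp (-(a*x))) atTop (nhds 0) :=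
    Real.tendsto_exp_atBot.comp h2
  filter_upwards [h3.eventually_le_const (by norm_num : (0:ℝ) < 1/2)] with x hx
  exact hx

open Filter in
private lemma mul_exp_ev {c K : ℝ} (hc : 0 < c) :
    ∀ᶠ x : ℝ in atTop, K * (x * Real.exp (-(c*x))) < 1/4 := by
  have hbase : Tendsto (fun y : ℝ => y * Real.exp (-y)) atTop (nhds 0) := by
    have := Real.tendsto_pow_mul_exp_neg_atTop_nhds_zero 1
    simpa using this
  have h1 : Tendsto (fun x : ℝ => c*x) atTop atTop := tendsto_id.const_mul_atTop hc
  have h2 : Tendsto (fun x : ℝ => (c*x) * Real.exp (-(c*x))) atTop (nhds 0) :=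
    hbase.comp h1
  have h3 : Tendsto (fun x : ℝ => (K/c) * ((c*x) * Real.exp (-(c*x)))) atTop (nhds 0) := by
    simpa using h2.const_mul (K/c)
  have h4 : Tendsto (fun x : ℝ => K * (x * Real.exp (-(c*x)))) atTop (nhds 0) := by
    convert h3 using 2 with x
    field_simp
  exact h4.eventually_lt_const (by norm_num : (0:ℝ) < 1/4)

set_option maxHeartbeats 1000000 in
/-- For every `b ∈ (0,1)` there is `x* = x*(b) > 0` such that for every `x > x*`:
`φ_1(bx) − (1/b)·φ_{1,b}(x) > 0`, `b·φ_{1,b}(x) − φ_1(x) < 0` and `Ψ_b(x) > 0`. -/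
theorem positivity_at_infinity (b : ℝ) (hb : b ∈ Set.Ioo (0:ℝ) 1) :
    ∃ xs : ℝ, 0 < xs ∧ ∀ x : ℝ, xs < x →
      0 < phi1 (b*x) - (1/b) * phi1b b x ∧
      b * phi1b b x - phi1 x < 0 ∧
      0 < Psi b x := by
  classical
  obtain ⟨hb0, hb1⟩ := hb
  have hpi := Real.pi_pos
  set c : ℝ := min b (1-b) with hc_def
  have hc : 0 < c := lt_min hb0 (by linarith)
  have hcb : c ≤ b := min_le_left _ _
  have hc1b : c ≤ 1 - b := min_le_right _ _
  have hc1 : c ≤ 1 := by linarith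
  set K : ℝ := 20*π*(1 + 1/b) with hK_def
  have hinvb : (1:ℝ) ≤ 1/b := one_le_one_div hb0 hb1.le
  have hK0 : 0 < K := by rw [hK_def]; positivity
  have hev1 := exp_half_ev (a := b*(π/3)) (by positivity)
  have hev2 := exp_half_ev (a := (π/3)) (by positivity)
  have hev3 := mul_exp_ev (c := c) (K := K) hc
  obtain ⟨a, ha⟩ := Filter.eventually_atTop.mp ((hev1.and hev2).and hev3)
  refine ⟨max a 1, lt_of_lt_of_le zero_lt_one (le_max_right _ _), ?_⟩
  intro x hx
  have hx1 : (1:ℝ) < x := lt_of_le_of_lt (le_max_right a 1) hx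
  have hx0 : (0:ℝ) < x := by linarith
  have hxa : a ≤ x := le_of_lt (lt_of_le_of_lt (le_max_left a 1) hx)
  obtain ⟨⟨he1, he2⟩, he3⟩ := ha x hxa
  set E : ℝ := Real.exp (-(c*x)) with hE_def
  have hE0 : 0 < E := Real.exp_pos _
  -- lower bound on phi1 x
  have hphi1x : 1/(4*x) - (4*π/3) * E ≤ phi1 x := by
    have hl := phi1_lower hx0
    have hhalf : Real.exp (-x*(π/3)) ≤ 1/2 := by
      have : -x*(π/3) = -((π/3)*x) := by ring
      rw [this]; exact he2
    have hq : 1/(4*x) ≤ (1 - Real.exp (-x*(π/3)))/(2*x) := by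
      rw [div_le_div_iff₀ (by positivity) (by positivity)]
      nlinarith
    have hEe : Real.exp (-x) ≤ E := by
      rw [hE_def]; apply Real.exp_le_exp.2; nlinarith
    have hmm : (4*π/3) * Real.exp (-x) ≤ (4*π/3) * E :=
      mul_le_mul_of_nonneg_left hEe (by positivity)
    linarith
  -- lower bound on phi1 (b*x)
  have hphi1bx : 1/(4*x) - (4*π/3) * E ≤ phi1 (b*x) := by
    have hbx0 : 0 < b*x := by positivity
    have hl := phi1_lower hbx0
    have hhalf : Real.exp (-(b*x)*(π/3)) ≤ 1/2 := by
      have : -(b*x)*(π/3) = -((b*(π/3))*x) := by ring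
      rw [this]; exact he1
    have hq : 1/(4*x) ≤ (1 - Real.exp (-(b*x)*(π/3)))/(2*(b*x)) := by
      rw [div_le_div_iff₀ (by positivity) (by positivity)]
      nlinarith
    have hEe : Real.exp (-(b*x)) ≤ E := by
      rw [hE_def]; apply Real.exp_le_exp.2; nlinarith
    have hmm : (4*π/3) * Real.exp (-(b*x)) ≤ (4*π/3) * E :=
      mul_le_mul_of_nonneg_left hEe (by positivity)
    linarith
  -- upper bound on |phi1b b x|
  have hphi1b : |phi1b b x| ≤ 2*π*E := by
    have h := phi1b_bound hb0 (le_of_lt hb1) hx0.le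
    have hEe : Real.exp (-(1-b)*x) ≤ E := by
      rw [hE_def]; apply Real.exp_le_exp.2; nlinarith
    calc |phi1b b x| ≤ 2*π*Real.exp (-(1-b)*x) := h
      _ ≤ 2*π*E := mul_le_mul_of_nonneg_left hEe (by positivity)
  obtain ⟨hlo, hhi⟩ := abs_le.mp hphi1b
  have hKE : K * E < 1/(4*x) := by
    rw [lt_div_iff₀ (by positivity)]
    nlinarith
  have hpib : (0:ℝ) ≤ π * (1/b) := by positivity
  have hKbig1 : (4*π/3) * E + (1/b) * (2*π*E) ≤ K * E := by
    have hco : (4*π/3) + (1/b) * (2*π) ≤ K := by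
      rw [hK_def]; nlinarith [hpi, hpib]
    nlinarith [mul_le_mul_of_nonneg_right hco hE0.le]
  have hKbig2 : b * (2*π*E) + (4*π/3) * E ≤ K * E := by
    have hco : b * (2*π) + (4*π/3) ≤ K := by
      rw [hK_def]; nlinarith [hpi, hpib]
    nlinarith [mul_le_mul_of_nonneg_right hco hE0.le]
  have hKbig3 : (4*π/3) * E + (4*π/3) * E + (b + 1/b) * (2*π*E) ≤ K * E := by
    have hco : (4*π/3) + (4*π/3) + (b + 1/b) * (2*π) ≤ K := by
      rw [hK_def]; nlinarith [hpi, hpib]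
    nlinarith [mul_le_mul_of_nonneg_right hco hE0.le]
  have hbinv0 : (0:ℝ) < 1/b := by positivity
  refine ⟨?_, ?_, ?_⟩
  · have h1 : (1/b) * phi1b b x ≤ (1/b) * (2*π*E) :=
      mul_le_mul_of_nonneg_left hhi hbinv0.le
    linarith
  · have h1 : b * phi1b b x ≤ b * (2*π*E) :=
      mul_le_mul_of_nonneg_left hhi hb0.le
    linarith
  · rw [Psi]
    have h1 : (b + 1/b) * phi1b b x ≤ (b + 1/b) * (2*π*E) :=
      mul_le_mul_of_nonneg_left hhi (by positivity)
    linarith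

end DCV16
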